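/- Let χ be a nonzero complex number and let I be the ideal of ℂ[z₁,z₂] generated by z₁²(z₂−1) and (χz₁+1)²z₂³. Define e₁ = 1 − z₂³ and e₂ = z₂³ in ℂ[z₁,z₂]. Then: (i) e₁ + e₂ = 1; (ii) e₁·e₂ ∈ I; (iii) e₁² − e₁ ∈ I and e₂² − e₂ ∈ I; and (iv) e₁(0,0) = 1, e₁(−1/χ,1) = 0, e₂(0,0) = 0, e₂(−1/χ,1) = 1. -/
import Mathlib


open MvPolynomial

theorem mem_key (χ : ℂ) (I : Ideal (MvPolynomial (Fin 2) ℂ))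
    (hI : I = Ideal.span {(X 0) ^ 2 * (X 1 - 1), (C χ * X 0 + 1) ^ 2 * (X 1) ^ 3}) :
    (1 - (X 1 : MvPolynomial (Fin 2) ℂ) ^ 3) * (X 1) ^ 3 ∈ I := by
  rw [hI, Ideal.mem_span_pair]
  refine ⟨-((X 1 ^ 2 + X 1 + 1) * (X 1) ^ 3 * (2 * C χ * X 0 + 3) * (C χ) ^ 2),
    -((X 1 ^ 2 + X 1 + 1) * (X 1 - 1) * (1 - 2 * C χ * X 0)), ?_⟩
  ring

/-- With `I = ⟨z₁²(z₂−1), (χz₁+1)²z₂³⟩` in `ℂ[z₁,z₂]` (`χ ≠ 0`), the polynomials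
`e₁ = 1 − z₂³` and `e₂ = z₂³` form a partition of unity modulo `I`:
(i) `e₁ + e₂ = 1`; (ii) `e₁e₂ ∈ I`; (iii) `e₁² − e₁ ∈ I` and `e₂² − e₂ ∈ I`;
(iv) `e₁(0,0) = 1`, `e₁(−1/χ,1) = 0`, `e₂(0,0) = 0`, `e₂(−1/χ,1) = 1`. -/
theorem partition_of_unity_example (χ : ℂ) (hχ : χ ≠ 0)
    (I : Ideal (MvPolynomial (Fin 2) ℂ))
    (hI : I = Ideal.span {(X 0) ^ 2 * (X 1 - 1), (C χ * X 0 + 1) ^ 2 * (X 1) ^ 3})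
    (e₁ e₂ : MvPolynomial (Fin 2) ℂ)
    (he₁ : e₁ = 1 - (X 1) ^ 3) (he₂ : e₂ = (X 1) ^ 3) :
    e₁ + e₂ = 1 ∧
    e₁ * e₂ ∈ I ∧
    (e₁ ^ 2 - e₁ ∈ I ∧ e₂ ^ 2 - e₂ ∈ I) ∧
    (eval ![0, 0] e₁ = 1 ∧ eval ![-(1 / χ), 1] e₁ = 0 ∧
     eval ![0, 0] e₂ = 0 ∧ eval ![-(1 / χ), 1] e₂ = 1) := by
  subst he₁ he₂
  have hkey := mem_key χ I hI
  refine ⟨by ring, hkey, ⟨?_, ?_⟩, ?_, ?_, ?_, ?_⟩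
  · have : ((1 : MvPolynomial (Fin 2) ℂ) - X 1 ^ 3) ^ 2 - (1 - X 1 ^ 3)
        = -((1 - X 1 ^ 3) * X 1 ^ 3) := by ring
    rw [this]; exact I.neg_mem hkey
  · have : ((X 1 : MvPolynomial (Fin 2) ℂ) ^ 3) ^ 2 - X 1 ^ 3
        = -((1 - X 1 ^ 3) * X 1 ^ 3) := by ring
    rw [this]; exact I.neg_mem hkey
  all_goals simp
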